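/- If there is a strictly decreasing palindromic sequence (with respect to k and ℓ) of length d of integers in {1,…,k^ℓ−1} (all terms nonzero), then there is a strictly decreasing palindromic sequence (with respect to k and ℓ+2) of length kd+k−1 of integers in {1,…,k^{ℓ+2}−1} (all terms nonzero). -/

import Mathlib

/-- `digitRev k ℓ n` : the radix-`k` digit reversal of `n`, viewed as a string of exactly
`ℓ` base-`k` digits (padded with leading zeros). -/
def digitRev (k : ℕ) : ℕ → ℕ → ℕ
  | 0, _ => 0
  | ℓ + 1, n => n % k * k ^ ℓ + digitRev k ℓ (n / k)

/-- A sequence of numbers in `{0,…,k^ℓ-1}` is palindromic (w.r.t. `k`, `ℓ`) if the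
`ℓ`-digit base-`k` string of the `i`-th term from the start is the reversal of that
of the `i`-th term from the end. -/
def Palindromic (k ℓ d : ℕ) (b : Fin d → ℕ) : Prop :=
  ∀ i : Fin d, digitRev k ℓ (b i) = b i.rev

/-- From a strictly decreasing palindromic (w.r.t. `k`, `ℓ`) sequence of length `d` of
nonzero numbers in `{1,…,k^ℓ-1}`, one obtains a strictly decreasing palindromic (w.r.t.
`k`, `ℓ+2`) sequence of length `k*d + k - 1` of nonzero numbers in `{1,…,k^(ℓ+2)-1}`. -/
lemma digitRev_zero (k : ℕ) : ∀ ℓ, digitRev k ℓ 0 = 0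
  | 0 => rfl
  | ℓ + 1 => by simp [digitRev, digitRev_zero k ℓ]

lemma digitRev_shift (k : ℕ) (hk : 0 < k) :
    ∀ ℓ m c, m < k ^ ℓ → c < k →
      digitRev k (ℓ + 1) (c * k ^ ℓ + m) = digitRev k ℓ m * k + c := by
  intro ℓ
  induction ℓ with
  | zero =>
    intro m c hm hc
    have hm0 : m = 0 := by simpa using hm
    subst hm0
    simp [digitRev, Nat.mod_eq_of_lt hc]
  | succ ℓ ih =>
    intro m c hm hc
    have e1 : (c * k ^ (ℓ + 1) + m) % k = m % k := by
      rw [pow_succ, ← mul_assoc, Nat.add_comm, Nat.add_mul_mod_self_right]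
    have e2 : (c * k ^ (ℓ + 1) + m) / k = c * k ^ ℓ + m / k := by
      rw [pow_succ, ← mul_assoc, Nat.add_comm, Nat.add_mul_div_right _ _ hk, Nat.add_comm]
    have hmk : m / k < k ^ ℓ := by
      rw [Nat.div_lt_iff_lt_mul hk]
      calc m < k ^ (ℓ + 1) := hm
        _ = k ^ ℓ * k := pow_succ k ℓ
    conv_lhs => rw [digitRev]
    rw [e1, e2, ih (m / k) c hmk hc]
    conv_rhs => rw [digitRev]
    ring

lemma digitRev_pal (k ℓ m c c' : ℕ) (hk : 0 < k) (hm : m < k ^ ℓ) (hc : c < k) (hc' : c' < k) :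
    digitRev k (ℓ + 2) (c * k ^ (ℓ + 1) + (m * k + c')) =
      c' * k ^ (ℓ + 1) + (digitRev k ℓ m * k + c) := by
  have h1 : m * k + c' < k ^ (ℓ + 1) := by
    calc m * k + c' < m * k + k := by omega
      _ = (m + 1) * k := by ring
      _ ≤ k ^ ℓ * k := Nat.mul_le_mul_right k hm
      _ = k ^ (ℓ + 1) := (pow_succ k ℓ).symm
  rw [digitRev_shift k hk (ℓ + 1) (m * k + c') c h1 hc]
  have h2 : digitRev k (ℓ + 1) (m * k + c') = c' * k ^ ℓ + digitRev k ℓ m := by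
    conv_lhs => rw [digitRev]
    have em : (m * k + c') % k = c' := by
      rw [Nat.add_comm, Nat.add_mul_mod_self_right, Nat.mod_eq_of_lt hc']
    have ed : (m * k + c') / k = m := by
      rw [Nat.add_comm, Nat.add_mul_div_right _ _ hk, Nat.div_eq_of_lt hc', Nat.zero_add]
    rw [em, ed]
  rw [h2]
  ring

lemma decompDiv (e t r : ℕ) (he : 0 < e) (hr : r < e) : (t * e + r) / e = t := by
  rw [Nat.add_comm, Nat.add_mul_div_right _ _ he, Nat.div_eq_of_lt hr, Nat.zero_add]

lemma decompMod (e t r : ℕ) (hr : r < e) : (t * e + r) % e = r := by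
  rw [Nat.add_comm, Nat.add_mul_mod_self_right, Nat.mod_eq_of_lt hr]

/-- the building block: leading digit `k-1-t`, middle digits `b r` (or zeros), trailing
digit `t` (or `t+1` for separators). -/
def palG (k ℓ d : ℕ) (b : Fin d → ℕ) (t r : ℕ) : ℕ :=
  (k - 1 - t) * k ^ (ℓ + 1) + (if h : r < d then b ⟨r, h⟩ * k + t else t + 1)

lemma palG_lt {d r : ℕ} (k ℓ : ℕ) (b : Fin d → ℕ) (t : ℕ) (h : r < d) :
    palG k ℓ d b t r = (k - 1 - t) * k ^ (ℓ + 1) + (b ⟨r, h⟩ * k + t) := by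
  rw [palG, dif_pos h]

lemma palG_ge {d r : ℕ} (k ℓ : ℕ) (b : Fin d → ℕ) (t : ℕ) (h : ¬ r < d) :
    palG k ℓ d b t r = (k - 1 - t) * k ^ (ℓ + 1) + (t + 1) := by
  rw [palG, dif_neg h]

theorem stmt10 (k ℓ d : ℕ) (hk : 2 ≤ k) (hℓ : 1 ≤ ℓ)
    (b : Fin d → ℕ) (hb : ∀ i, 1 ≤ b i ∧ b i < k ^ ℓ)
    (hpal : Palindromic k ℓ d b) (hdec : StrictAnti b) :
    ∃ b' : Fin (k * d + k - 1) → ℕ,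
      (∀ i, 1 ≤ b' i ∧ b' i < k ^ (ℓ + 2)) ∧
      Palindromic k (ℓ + 2) (k * d + k - 1) b' ∧ StrictAnti b' := by
  have hk0 : 0 < k := by omega
  have hd1 : 0 < d + 1 := Nat.succ_pos d
  have hKpos : 0 < k ^ (ℓ + 1) := pow_pos hk0 _
  have hkltK : k < k ^ (ℓ + 1) := by
    calc k = k ^ 1 := (pow_one k).symm
      _ < k ^ (ℓ + 1) := Nat.pow_lt_pow_right (by omega) (by omega)
  have hbK : ∀ i : Fin d, b i * k + k ≤ k ^ (ℓ + 1) := by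
    intro i
    calc b i * k + k = (b i + 1) * k := by ring
      _ ≤ k ^ ℓ * k := Nat.mul_le_mul_right k (hb i).2
      _ = k ^ (ℓ + 1) := (pow_succ k ℓ).symm
  have hNlt : k * d + k - 1 < k * (d + 1) := by
    have e : k * (d + 1) = k * d + k := by ring
    have h1 : k * d + k - 1 < k * d + k := Nat.sub_lt (Nat.add_pos_right _ hk0) one_pos
    rw [e]; exact h1
  -- division facts for an index below k*d+k-1
  have hdiv : ∀ n : ℕ, n < k * d + k - 1 → n / (d + 1) ≤ k - 1 := by
    intro n hn
    have h1 : n < k * (d + 1) := lt_trans hn hNlt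
    have h2 : n / (d + 1) < k := (Nat.div_lt_iff_lt_mul hd1).mpr h1
    omega
  refine ⟨fun j => palG k ℓ d b (j.val / (d + 1)) (j.val % (d + 1)), ?_, ?_, ?_⟩
  · -- bounds
    intro j
    dsimp only
    have ht : j.val / (d + 1) ≤ k - 1 := hdiv j.val j.isLt
    set t := j.val / (d + 1) with htdef
    set r := j.val % (d + 1) with hrdef
    clear_value t r
    have hsub : k - 1 - t ≤ k - 1 := Nat.sub_le _ _
    have hA : (k - 1 - t) * k ^ (ℓ + 1) ≤ (k - 1) * k ^ (ℓ + 1) :=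
      Nat.mul_le_mul_right _ hsub
    have epow : k ^ (ℓ + 2) = (k - 1) * k ^ (ℓ + 1) + k ^ (ℓ + 1) := by
      have : (k - 1) * k ^ (ℓ + 1) + k ^ (ℓ + 1) = (k - 1 + 1) * k ^ (ℓ + 1) := by ring
      rw [this, Nat.sub_add_cancel (by omega), ← pow_succ']
    by_cases h : r < d
    · rw [palG_lt k ℓ b t h]
      have hb1 := (hb ⟨r, h⟩).1
      have hb2 := hbK ⟨r, h⟩
      constructor
      · have h0 : 0 < b ⟨r, h⟩ * k + t :=
          Nat.lt_of_lt_of_le (Nat.mul_pos hb1 hk0) (Nat.le_add_right _ _)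
        exact Nat.le_trans h0 (Nat.le_add_left _ _)
      · rw [epow]
        have : b ⟨r, h⟩ * k + t < k ^ (ℓ + 1) := by
          have htk : t < k := by omega
          linarith
        linarith
    · rw [palG_ge k ℓ b t h]
      constructor
      · exact Nat.le_trans (Nat.succ_le_succ (Nat.zero_le t)) (Nat.le_add_left _ _)
      · rw [epow]
        have h5 : t + 1 ≤ k := by omega
        linarith
  · -- palindromic
    intro j
    dsimp only
    have hN1 : 1 ≤ k * d + k := Nat.add_pos_right _ hk0
    have ht : j.val / (d + 1) ≤ k - 1 := hdiv j.val j.isLt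
    set t := j.val / (d + 1) with htdef
    set r := j.val % (d + 1) with hrdef
    have hdm : (d + 1) * t + r = j.val := Nat.div_add_mod j.val (d + 1)
    have hr : r < d + 1 := Nat.mod_lt _ hd1
    clear_value t r
    have hrev : (Fin.rev j : ℕ) = k * d + k - 1 - (j.val + 1) := Fin.val_rev j
    by_cases h : r < d
    · -- main block terms
      have hd0 : 0 < d := by omega
      -- the reversed position
      have hre : k * d + k - 1 - (j.val + 1) = (k - 1 - t) * (d + 1) + (d - 1 - r) := by
        refine Nat.sub_eq_of_eq_add ?_
        rw [← hdm]
        obtain ⟨s, hs⟩ : ∃ s, s = k - 1 - t := ⟨_, rfl⟩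
        obtain ⟨u, hu⟩ : ∃ u, u = d - 1 - r := ⟨_, rfl⟩
        rw [← hs, ← hu]
        have h1 : t + s = k - 1 := by omega
        have h2 : r + u = d - 1 := by omega
        zify [hN1, show 1 ≤ k by omega, show 1 ≤ d by omega] at h1 h2 ⊢
        linear_combination (-(d : ℤ) - 1) * h1 - h2
      have hrd' : d - 1 - r < d := by omega
      have erevdiv : (Fin.rev j : ℕ) / (d + 1) = k - 1 - t := by
        rw [hrev, hre, decompDiv _ _ _ hd1 (by omega)]
      have erevmod : (Fin.rev j : ℕ) % (d + 1) = d - 1 - r := by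
        rw [hrev, hre, decompMod _ _ _ (by omega)]
      rw [palG_lt k ℓ b t h]
      rw [digitRev_pal k ℓ (b ⟨r, h⟩) (k - 1 - t) t hk0 (hb ⟨r, h⟩).2 (by omega) (by omega)]
      rw [hpal ⟨r, h⟩]
      have e1 : k - 1 - (k - 1 - t) = t := by omega
      have e3 : (⟨r, h⟩ : Fin d).rev = ⟨d - 1 - r, hrd'⟩ := by
        refine Fin.ext ?_
        rw [Fin.val_rev]
        simp only []
        omega
      rw [e3, erevdiv, erevmod, palG_lt k ℓ b (k - 1 - t) hrd', e1]
    · -- separator terms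
      have hrd : r = d := by omega
      have htk2 : t ≤ k - 2 := by
        by_contra hcon
        push_neg at hcon
        have h1 : (k - 1) * (d + 1) ≤ t * (d + 1) := Nat.mul_le_mul_right _ (by omega)
        have h2 : (k - 1) * (d + 1) + d + 1 = k * d + k := by
          zify [show 1 ≤ k by omega]
          ring
        have h3 : j.val = t * (d + 1) + d := by rw [← hdm, hrd]; ring
        have h4 : j.val < k * d + k - 1 := j.isLt
        have h5 : k * d + k - 1 < k * d + k := Nat.sub_lt (Nat.add_pos_right _ hk0) one_pos
        linarith
      have hre : k * d + k - 1 - (j.val + 1) = (k - 2 - t) * (d + 1) + d := by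
        refine Nat.sub_eq_of_eq_add ?_
        rw [← hdm, hrd]
        obtain ⟨s, hs⟩ : ∃ s, s = k - 2 - t := ⟨_, rfl⟩
        rw [← hs]
        have h1 : t + s = k - 2 := by omega
        zify [hN1, show 2 ≤ k from hk] at h1 ⊢
        linear_combination (-(d : ℤ) - 1) * h1
      have erevdiv : (Fin.rev j : ℕ) / (d + 1) = k - 2 - t := by
        rw [hrev, hre, decompDiv _ _ _ hd1 (by omega)]
      have erevmod : (Fin.rev j : ℕ) % (d + 1) = d := by
        rw [hrev, hre, decompMod _ _ _ (by omega)]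
      rw [palG_ge k ℓ b t h]
      have hrw : (k - 1 - t) * k ^ (ℓ + 1) + (t + 1)
          = (k - 1 - t) * k ^ (ℓ + 1) + (0 * k + (t + 1)) := by ring
      rw [hrw, digitRev_pal k ℓ 0 (k - 1 - t) (t + 1) hk0 (pow_pos hk0 _)
        (by omega) (by omega), digitRev_zero]
      show _ = palG k ℓ d b ((Fin.rev j : ℕ) / (d + 1)) ((Fin.rev j : ℕ) % (d + 1))
      rw [erevdiv, erevmod, palG_ge k ℓ b (k - 2 - t) (lt_irrefl d)]
      have e1 : k - 1 - (k - 2 - t) = t + 1 := by omega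
      have e2 : k - 2 - t + 1 = k - 1 - t := by omega
      rw [e1, e2]
      ring
  · -- strict antitone
    have adj : ∀ n, n + 1 < k * d + k - 1 →
        palG k ℓ d b ((n + 1) / (d + 1)) ((n + 1) % (d + 1)) <
          palG k ℓ d b (n / (d + 1)) (n % (d + 1)) := by
      intro n hn
      set t := n / (d + 1) with htdef
      set r := n % (d + 1) with hrdef
      have hdm : (d + 1) * t + r = n := Nat.div_add_mod n (d + 1)
      have hr : r < d + 1 := Nat.mod_lt _ hd1
      clear_value t r
      by_cases hcase : r + 1 < d + 1
      · -- same block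
        have e' : n + 1 = t * (d + 1) + (r + 1) := by
          rw [Nat.mul_comm t (d + 1), ← Nat.add_assoc, hdm]
        rw [e', decompDiv _ _ _ hd1 hcase, decompMod _ _ _ hcase]
        by_cases h2 : r + 1 < d
        · have h3 : r < d := by omega
          rw [palG_lt k ℓ b t h2, palG_lt k ℓ b t h3]
          have hlt : b ⟨r + 1, h2⟩ < b ⟨r, h3⟩ := hdec (show (⟨r, h3⟩ : Fin d) < ⟨r + 1, h2⟩ by
            simp [Fin.lt_def])
          have : b ⟨r + 1, h2⟩ * k < b ⟨r, h3⟩ * k := (Nat.mul_lt_mul_right hk0).mpr hlt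
          linarith
        · have h3 : r < d := by omega
          rw [palG_ge k ℓ b t h2, palG_lt k ℓ b t h3]
          have hb1 := (hb ⟨r, h3⟩).1
          have hbk1 : 1 * k ≤ b ⟨r, h3⟩ * k := Nat.mul_le_mul_right k hb1
          linarith
      · -- rollover to next block
        have hrd : r = d := by omega
        have e' : n + 1 = (t + 1) * (d + 1) + 0 := by
          have h2 : (t + 1) * (d + 1) + 0 = (d + 1) * t + r + 1 := by rw [hrd]; ring
          rw [h2, hdm]
        have ht1 : t + 1 ≤ k - 1 := by
          have h1 := hdiv (n + 1) hn
          rw [e', decompDiv _ _ _ hd1 hd1] at h1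
          exact h1
        rw [e', decompDiv _ _ _ hd1 hd1, decompMod _ _ _ hd1]
        have esub : (k - 1 - t) * k ^ (ℓ + 1)
            = (k - 1 - (t + 1)) * k ^ (ℓ + 1) + k ^ (ℓ + 1) := by
          have : k - 1 - t = (k - 1 - (t + 1)) + 1 := by omega
          rw [this]; ring
        by_cases hd0 : 0 < d
        · rw [palG_lt k ℓ b (t + 1) hd0, palG_ge k ℓ b t (by omega)]
          have hb2 := hbK ⟨0, hd0⟩
          rw [esub]
          have : b ⟨0, hd0⟩ * k < k ^ (ℓ + 1) := by linarith
          linarith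
        · rw [palG_ge k ℓ b (t + 1) (by omega), palG_ge k ℓ b t (by omega)]
          rw [esub]
          omega
    intro i j hij
    have key : ∀ m n : ℕ, n < k * d + k - 1 → m < n →
        palG k ℓ d b (n / (d + 1)) (n % (d + 1)) <
          palG k ℓ d b (m / (d + 1)) (m % (d + 1)) := by
      intro m n
      induction n with
      | zero => omega
      | succ p ih =>
        intro hn hmn
        rcases Nat.lt_or_ge m p with hc | hc
        · exact lt_trans (adj p hn) (ih (by omega) hc)
        · have : m = p := by omega
          subst this
          exact adj m hn
    exact key i.val j.val j.isLt hij
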